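/- Let (X, μ) and (T, ν) be finite measure spaces, let (φ_ℓ)_{ℓ≥1} be an orthonormal family in L²(μ), let (λ_ℓ)_{ℓ≥1} be functions in L²(ν) with Σ_{ℓ=1}^∞ ‖λ_ℓ‖²_{L²(ν)} < ∞, and let C_t : T × T → ℝ be measurable, bounded, and positive semidefinite in the integral sense: for every g ∈ L¹(ν), ∫∫ g(t) C_t(t,t') g(t') dν(t) dν(t') ≥ 0. Then for every f ∈ L²(μ⊗ν), setting f_ℓ(t) := ∫_X f(x,t) φ_ℓ(x) dμ(x), one has ∫∫_{(X×T)²} f(x,t) [Σ_{ℓ=1}^∞ λ_ℓ(t) C_t(t,t') λ_ℓ(t') φ_ℓ(x) φ_ℓ(x')] f(x',t') d(μ⊗ν)(x,t) d(μ⊗ν)(x',t') = Σ_{ℓ=1}^∞ ∫∫ f_ℓ(t) λ_ℓ(t) C_t(t,t') λ_ℓ(t') f_ℓ(t') dν(t) dν(t') ≥ 0, where all the integrals and the series converge absolutely. -/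

import Mathlib

open MeasureTheory Filter

lemma integrable_mul_of_memL2 {α : Type*} [MeasurableSpace α] {μ : Measure α} {u v : α → ℝ}
    (hu : MemLp u 2 μ) (hv : MemLp v 2 μ) : Integrable (fun x => u x * v x) μ := by
  refine (hu.integrable_sq.add hv.integrable_sq).mono'
    (hu.aestronglyMeasurable.mul hv.aestronglyMeasurable) ?_
  filter_upwards with x
  simp only [Pi.add_apply, Real.norm_eq_abs, abs_mul]
  nlinarith [sq_abs (u x), sq_abs (v x), sq_nonneg (|u x| - |v x|), abs_nonneg (u x),
    abs_nonneg (v x)]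

lemma integral_abs_mul_le_sqrt_mul_sqrt {α : Type*} [MeasurableSpace α] {μ : Measure α}
    {u v : α → ℝ} (hu : MemLp u 2 μ) (hv : MemLp v 2 μ) :
    ∫ x, |u x * v x| ∂μ ≤
      Real.sqrt (∫ x, u x ^ 2 ∂μ) * Real.sqrt (∫ x, v x ^ 2 ∂μ) := by
  have hpq : Real.HolderConjugate 2 2 := Real.HolderConjugate.two_two
  have h2 : (ENNReal.ofReal (2:ℝ)) = 2 := by norm_num
  have := integral_mul_norm_le_Lp_mul_Lq (μ := μ) hpq (h2.symm ▸ hu) (h2.symm ▸ hv)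
  simp only [Real.norm_eq_abs, Real.rpow_two, sq_abs] at this
  calc ∫ x, |u x * v x| ∂μ = ∫ x, |u x| * |v x| ∂μ := by simp [abs_mul]
    _ ≤ (∫ x, u x ^ 2 ∂μ) ^ ((1:ℝ)/2) * (∫ x, v x ^ 2 ∂μ) ^ ((1:ℝ)/2) := this
    _ = _ := by rw [← Real.sqrt_eq_rpow, ← Real.sqrt_eq_rpow]

/-- Non-negative definiteness part of Theorem 1 (Wellposedness of Mercer's Kernels):
for an orthonormal family `φ_ℓ` in `L²(μ)`, `λ_ℓ ∈ L²(ν)` with `Σ ‖λ_ℓ‖² < ∞`, and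
a bounded measurable `C_t` that is positive semidefinite in the integral sense, for
every `f ∈ L²(μ⊗ν)`, with `f_ℓ(t) = ∫ f(x,t) φ_ℓ(x) dμ(x)`,
`∫∫ f(z) [Σ_ℓ λ_ℓ(t) C_t(t,t') λ_ℓ(t') φ_ℓ(x) φ_ℓ(x')] f(z') dz dz'
 = Σ_ℓ ∫∫ f_ℓ(t) λ_ℓ(t) C_t(t,t') λ_ℓ(t') f_ℓ(t') dν dν ≥ 0`,
with all the integrals and series converging (absolutely). -/
theorem stmt_1 {X T : Type*} [MeasurableSpace X] [MeasurableSpace T]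
    (μ : Measure X) (ν : Measure T) [IsFiniteMeasure μ] [IsFiniteMeasure ν]
    (φ : ℕ → X → ℝ) (lam : ℕ → T → ℝ) (Ct : T → T → ℝ) (M : ℝ)
    (hφmeas : ∀ ℓ, Measurable (φ ℓ))
    (hφL2 : ∀ ℓ, MemLp (φ ℓ) 2 μ)
    (hφon : ∀ ℓ ℓ', ∫ x, φ ℓ x * φ ℓ' x ∂μ = if ℓ = ℓ' then 1 else 0)
    (hlammeas : ∀ ℓ, Measurable (lam ℓ))
    (hlamL2 : ∀ ℓ, MemLp (lam ℓ) 2 ν)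
    (hsum : Summable fun ℓ => ∫ t, (lam ℓ t) ^ 2 ∂ν)
    (hCtmeas : Measurable (Function.uncurry Ct))
    (hCtbd : ∀ t t', |Ct t t'| ≤ M)
    (hCtpsd : ∀ g : T → ℝ, Integrable g ν →
      0 ≤ ∫ t, ∫ t', g t * Ct t t' * g t' ∂ν ∂ν)
    (f : X × T → ℝ) (hfmeas : Measurable f) (hf : MemLp f 2 (μ.prod ν))
    (fc : ℕ → T → ℝ) (hfc : ∀ ℓ t, fc ℓ t = ∫ x, f (x, t) * φ ℓ x ∂μ) :
    (Integrable (fun q : (X × T) × (X × T) =>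
        f q.1 * (∑' ℓ : ℕ,
          lam ℓ q.1.2 * Ct q.1.2 q.2.2 * lam ℓ q.2.2 * φ ℓ q.1.1 * φ ℓ q.2.1)
          * f q.2) ((μ.prod ν).prod (μ.prod ν))) ∧
    (∀ ℓ : ℕ, Integrable (fun q : T × T =>
        fc ℓ q.1 * lam ℓ q.1 * Ct q.1 q.2 * lam ℓ q.2 * fc ℓ q.2) (ν.prod ν)) ∧
    (Summable fun ℓ : ℕ =>
        ∫ t, ∫ t', fc ℓ t * lam ℓ t * Ct t t' * lam ℓ t' * fc ℓ t' ∂ν ∂ν) ∧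
    (∫ q : (X × T) × (X × T),
        f q.1 * (∑' ℓ : ℕ,
          lam ℓ q.1.2 * Ct q.1.2 q.2.2 * lam ℓ q.2.2 * φ ℓ q.1.1 * φ ℓ q.2.1)
          * f q.2 ∂((μ.prod ν).prod (μ.prod ν))
      = ∑' ℓ : ℕ,
          ∫ t, ∫ t', fc ℓ t * lam ℓ t * Ct t t' * lam ℓ t' * fc ℓ t' ∂ν ∂ν) ∧
    (0 ≤ ∑' ℓ : ℕ,
        ∫ t, ∫ t', fc ℓ t * lam ℓ t * Ct t t' * lam ℓ t' * fc ℓ t' ∂ν ∂ν) := by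
  -- trivial case: `T` empty
  rcases isEmpty_or_nonempty T with hT | hT
  · have hν : ν = 0 := by
      ext s hs
      simp [Set.eq_empty_of_isEmpty s]
    subst hν
    simp only [Measure.prod_zero, Measure.zero_prod, integral_zero_measure]
    refine ⟨integrable_zero_measure, fun ℓ => integrable_zero_measure, summable_zero, by simp, by simp⟩
  have hM : 0 ≤ M := le_trans (abs_nonneg _) (hCtbd (Classical.arbitrary T) (Classical.arbitrary T))
  -- notation
  set m : Measure (X × T) := μ.prod ν with hm
  set A : ℕ → X × T → ℝ := fun ℓ p => f p * (lam ℓ p.2 * φ ℓ p.1) with hA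
  set g : ℕ → T → ℝ := fun ℓ t => fc ℓ t * lam ℓ t with hg
  set J : ℕ → T → ℝ := fun ℓ t => ∫ t', Ct t t' * g ℓ t' ∂ν with hJ
  set H : ℕ → (X × T) × (X × T) → ℝ :=
    fun ℓ q => A ℓ q.1 * Ct q.1.2 q.2.2 * A ℓ q.2 with hH
  set F2 : ℝ := ∫ p, f p ^ 2 ∂m with hF2
  set L2 : ℕ → ℝ := fun ℓ => ∫ t, lam ℓ t ^ 2 ∂ν with hL2
  have hF2nn : 0 ≤ F2 := integral_nonneg fun p => sq_nonneg _
  have hL2nn : ∀ ℓ, 0 ≤ L2 ℓ := fun ℓ => integral_nonneg fun t => sq_nonneg _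
  -- the second factor of `A` is in L²
  have hvmem : ∀ ℓ, MemLp (fun p : X × T => lam ℓ p.2 * φ ℓ p.1) 2 m := by
    intro ℓ
    have hmeas : AEStronglyMeasurable (fun p : X × T => lam ℓ p.2 * φ ℓ p.1) m :=
      (((hlammeas ℓ).comp measurable_snd).mul
        ((hφmeas ℓ).comp measurable_fst)).aestronglyMeasurable
    rw [memLp_two_iff_integrable_sq hmeas]
    have : Integrable (fun p : X × T => φ ℓ p.1 ^ 2 * lam ℓ p.2 ^ 2) m :=
      (hφL2 ℓ).integrable_sq.mul_prod (hlamL2 ℓ).integrable_sq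
    exact this.congr (Eventually.of_forall fun p => by ring)
  have hv2 : ∀ ℓ, ∫ p, (lam ℓ p.2 * φ ℓ p.1) ^ 2 ∂m = L2 ℓ := by
    intro ℓ
    have h1 : ∫ p, (lam ℓ p.2 * φ ℓ p.1) ^ 2 ∂m
        = ∫ p : X × T, φ ℓ p.1 ^ 2 * lam ℓ p.2 ^ 2 ∂m :=
      integral_congr_ae (Eventually.of_forall fun p => by ring)
    have h2 : ∫ x, φ ℓ x ^ 2 ∂μ = 1 := by
      have := hφon ℓ ℓ
      simp only [if_pos rfl] at this
      simpa [sq] using this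
    rw [h1, integral_prod_mul (fun x => φ ℓ x ^ 2) (fun t => lam ℓ t ^ 2), h2, one_mul]
  -- `A` integrable, with L¹-norm controlled by Cauchy–Schwarz
  have hAint : ∀ ℓ, Integrable (A ℓ) m := fun ℓ =>
    integrable_mul_of_memL2 hf (hvmem ℓ)
  have hAabs : ∀ ℓ, ∫ q, |A ℓ q| ∂m ≤ Real.sqrt F2 * Real.sqrt (L2 ℓ) := by
    intro ℓ
    have := integral_abs_mul_le_sqrt_mul_sqrt hf (hvmem ℓ)
    rw [hv2 ℓ] at this
    exact this
  have hAabsnn : ∀ ℓ, 0 ≤ ∫ q, |A ℓ q| ∂m := fun ℓ => integral_nonneg fun q => abs_nonneg _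
  have hA2 : ∀ ℓ, (∫ q, |A ℓ q| ∂m) ^ 2 ≤ F2 * L2 ℓ := by
    intro ℓ
    nlinarith [hAabs ℓ, hAabsnn ℓ, Real.sq_sqrt hF2nn, Real.sq_sqrt (hL2nn ℓ),
      Real.sqrt_nonneg F2, Real.sqrt_nonneg (L2 ℓ)]
  -- fc and g measurability
  have hfcsm : ∀ ℓ, StronglyMeasurable (fc ℓ) := by
    intro ℓ
    have h1 : fc ℓ = fun t => ∫ x, (fun p : X × T => f p * φ ℓ p.1) (x, t) ∂μ :=
      funext fun t => hfc ℓ t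
    rw [h1]
    exact (hfmeas.mul ((hφmeas ℓ).comp measurable_fst)).stronglyMeasurable.integral_prod_left'
  have hgsm : ∀ ℓ, StronglyMeasurable (g ℓ) := fun ℓ =>
    (hfcsm ℓ).mul (hlammeas ℓ).stronglyMeasurable
  have hgeq : ∀ ℓ t, g ℓ t = ∫ x, A ℓ (x, t) ∂μ := by
    intro ℓ t
    calc g ℓ t = (∫ x, f (x, t) * φ ℓ x ∂μ) * lam ℓ t := by rw [hg]; simp [hfc ℓ t]
      _ = ∫ x, (f (x, t) * φ ℓ x) * lam ℓ t ∂μ := (integral_mul_const _ _).symm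
      _ = ∫ x, A ℓ (x, t) ∂μ :=
        integral_congr_ae (Eventually.of_forall fun x => by rw [hA]; ring)
  have hgint : ∀ ℓ, Integrable (g ℓ) ν := by
    intro ℓ
    have := (hAint ℓ).integral_prod_right
    exact this.congr (Eventually.of_forall fun t => (hgeq ℓ t).symm)
  have hgabs : ∀ ℓ, ∫ t, |g ℓ t| ∂ν ≤ ∫ q, |A ℓ q| ∂m := by
    intro ℓ
    have h1 : ∀ t, |g ℓ t| ≤ ∫ x, |A ℓ (x, t)| ∂μ := by
      intro t
      rw [hgeq ℓ t]
      simpa [Real.norm_eq_abs] using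
        norm_integral_le_integral_norm (fun x => A ℓ (x, t))
    calc ∫ t, |g ℓ t| ∂ν ≤ ∫ t, ∫ x, |A ℓ (x, t)| ∂μ ∂ν :=
          integral_mono (hgint ℓ).abs ((hAint ℓ).abs.integral_prod_right) h1
      _ = ∫ q, |A ℓ q| ∂m := (integral_prod_symm _ (hAint ℓ).abs).symm
  have hgabsnn : ∀ ℓ, 0 ≤ ∫ t, |g ℓ t| ∂ν := fun ℓ => integral_nonneg fun t => abs_nonneg _
  -- J : bounded, measurable
  have hJsm : ∀ ℓ, StronglyMeasurable (J ℓ) := by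
    intro ℓ
    have : J ℓ = fun t => ∫ t', (fun p : T × T => Ct p.1 p.2 * g ℓ p.2) (t, t') ∂ν := rfl
    rw [this]
    exact (hCtmeas.stronglyMeasurable.mul
      ((hgsm ℓ).comp_measurable measurable_snd)).integral_prod_right'
  have hCtG : ∀ ℓ (t : T), Integrable (fun t' => Ct t t' * g ℓ t') ν := by
    intro ℓ t
    exact (hgint ℓ).bdd_mul
      ((hCtmeas.comp (measurable_const.prodMk measurable_id)).aestronglyMeasurable)
      (Eventually.of_forall fun t' => by rw [Real.norm_eq_abs]; exact hCtbd t t')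
  have hJbd : ∀ ℓ t, |J ℓ t| ≤ M * ∫ t', |g ℓ t'| ∂ν := by
    intro ℓ t
    calc |J ℓ t| ≤ ∫ t', |Ct t t' * g ℓ t'| ∂ν := by
          have h := norm_integral_le_integral_norm (μ := ν) (fun t' => Ct t t' * g ℓ t')
          simp only [Real.norm_eq_abs] at h
          exact h
      _ ≤ ∫ t', M * |g ℓ t'| ∂ν := by
          refine integral_mono (hCtG ℓ t).abs ((hgint ℓ).abs.const_mul M) fun t' => ?_
          rw [abs_mul]
          exact mul_le_mul_of_nonneg_right (hCtbd t t') (abs_nonneg _)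
      _ = M * ∫ t', |g ℓ t'| ∂ν := integral_const_mul _ _
  -- the statement's iterated integral equals ∫ g * J
  have hIJ : ∀ ℓ, (∫ t, ∫ t', fc ℓ t * lam ℓ t * Ct t t' * lam ℓ t' * fc ℓ t' ∂ν ∂ν)
      = ∫ t, g ℓ t * J ℓ t ∂ν := by
    intro ℓ
    refine integral_congr_ae (Eventually.of_forall fun t => ?_)
    have h1 : (fun t' => fc ℓ t * lam ℓ t * Ct t t' * lam ℓ t' * fc ℓ t')
        = fun t' => g ℓ t * (Ct t t' * g ℓ t') := by
      funext t'
      rw [hg]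
      ring
    dsimp only
    rw [h1, integral_const_mul]
  -- nonnegativity of each term
  have hInn : ∀ ℓ, 0 ≤ ∫ t, ∫ t', fc ℓ t * lam ℓ t * Ct t t' * lam ℓ t' * fc ℓ t' ∂ν ∂ν := by
    intro ℓ
    rw [hIJ ℓ]
    refine le_trans (hCtpsd (g ℓ) (hgint ℓ)) (le_of_eq ?_)
    refine integral_congr_ae (Eventually.of_forall fun t => ?_)
    simp only [mul_assoc]
    rw [integral_const_mul]
  -- conclusion 2
  have hconc2 : ∀ ℓ : ℕ, Integrable (fun q : T × T =>
      fc ℓ q.1 * lam ℓ q.1 * Ct q.1 q.2 * lam ℓ q.2 * fc ℓ q.2) (ν.prod ν) := by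
    intro ℓ
    have hgg : Integrable (fun q : T × T => g ℓ q.1 * g ℓ q.2) (ν.prod ν) :=
      (hgint ℓ).mul_prod (hgint ℓ)
    have h := hgg.bdd_mul hCtmeas.aestronglyMeasurable
      (Eventually.of_forall fun q => by rw [Real.norm_eq_abs]; exact hCtbd _ _)
    exact h.congr (Eventually.of_forall fun q => by
      simp only [Function.uncurry, hg]
      ring)
  -- integrability of g * J
  have hgJint : ∀ ℓ, Integrable (fun t => g ℓ t * J ℓ t) ν := by
    intro ℓ
    have := (hgint ℓ).bdd_mul (hJsm ℓ).aestronglyMeasurable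
      (Eventually.of_forall fun t => by rw [Real.norm_eq_abs]; exact hJbd ℓ t)
    exact this.congr (Eventually.of_forall fun t => mul_comm _ _)
  -- bound for the terms
  have hIbd : ∀ ℓ, ∫ t, g ℓ t * J ℓ t ∂ν ≤ M * F2 * L2 ℓ := by
    intro ℓ
    have h1 : ∫ t, g ℓ t * J ℓ t ∂ν
        ≤ ∫ t, |g ℓ t| * (M * ∫ t', |g ℓ t'| ∂ν) ∂ν := by
      refine integral_mono (hgJint ℓ) ((hgint ℓ).abs.mul_const _) fun t => ?_
      calc g ℓ t * J ℓ t ≤ |g ℓ t * J ℓ t| := le_abs_self _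
        _ = |g ℓ t| * |J ℓ t| := abs_mul _ _
        _ ≤ |g ℓ t| * (M * ∫ t', |g ℓ t'| ∂ν) :=
            mul_le_mul_of_nonneg_left (hJbd ℓ t) (abs_nonneg _)
    rw [integral_mul_const] at h1
    have h2 : (∫ t, |g ℓ t| ∂ν) * (M * ∫ t', |g ℓ t'| ∂ν) ≤ M * F2 * L2 ℓ := by
      have e2 : (∫ t, |g ℓ t| ∂ν) ^ 2 ≤ (∫ q, |A ℓ q| ∂m) ^ 2 :=
        pow_le_pow_left₀ (hgabsnn ℓ) (hgabs ℓ) 2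
      calc (∫ t, |g ℓ t| ∂ν) * (M * ∫ t', |g ℓ t'| ∂ν)
          = M * (∫ t, |g ℓ t| ∂ν) ^ 2 := by ring
        _ ≤ M * (F2 * L2 ℓ) := mul_le_mul_of_nonneg_left (e2.trans (hA2 ℓ)) hM
        _ = M * F2 * L2 ℓ := by ring
    exact le_trans h1 h2
  -- conclusion 3 : summability
  have hconc3 : Summable fun ℓ : ℕ =>
      ∫ t, ∫ t', fc ℓ t * lam ℓ t * Ct t t' * lam ℓ t' * fc ℓ t' ∂ν ∂ν := by
    have hb : Summable (fun ℓ => M * F2 * L2 ℓ) := by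
      simpa [mul_assoc] using hsum.mul_left (M * F2)
    refine Summable.of_nonneg_of_le hInn (fun ℓ => ?_) hb
    rw [hIJ ℓ]
    exact hIbd ℓ
  -- integrability of each H ℓ
  have hHint : ∀ ℓ, Integrable (H ℓ) (m.prod m) := by
    intro ℓ
    have h := ((hAint ℓ).mul_prod (hAint ℓ)).bdd_mul
      ((hCtmeas.comp ((measurable_snd.comp measurable_fst).prodMk
        (measurable_snd.comp measurable_snd))).aestronglyMeasurable)
      (Eventually.of_forall fun q => by rw [Real.norm_eq_abs]; exact hCtbd _ _)
    exact h.congr (Eventually.of_forall fun q => by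
      simp only [hH, Function.comp, Function.uncurry]
      ring)
  -- L¹ bound for H ℓ
  have hHabs : ∀ ℓ, ∫ q, ‖H ℓ q‖ ∂(m.prod m) ≤ M * F2 * L2 ℓ := by
    intro ℓ
    have h1 : ∫ q, ‖H ℓ q‖ ∂(m.prod m)
        ≤ ∫ q : (X × T) × (X × T), M * (|A ℓ q.1| * |A ℓ q.2|) ∂(m.prod m) := by
      refine integral_mono (hHint ℓ).norm
        (((hAint ℓ).abs.mul_prod (hAint ℓ).abs).const_mul M) fun q => ?_
      rw [Real.norm_eq_abs, hH]
      simp only [abs_mul]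
      calc |A ℓ q.1| * |Ct q.1.2 q.2.2| * |A ℓ q.2|
          = |Ct q.1.2 q.2.2| * (|A ℓ q.1| * |A ℓ q.2|) := by ring
        _ ≤ M * (|A ℓ q.1| * |A ℓ q.2|) :=
            mul_le_mul_of_nonneg_right (hCtbd _ _)
              (mul_nonneg (abs_nonneg _) (abs_nonneg _))
    rw [integral_const_mul, integral_prod_mul (fun p => |A ℓ p|) (fun p => |A ℓ p|)] at h1
    calc ∫ q, ‖H ℓ q‖ ∂(m.prod m)
        ≤ M * ((∫ q, |A ℓ q| ∂m) * (∫ q, |A ℓ q| ∂m)) := h1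
      _ = M * (∫ q, |A ℓ q| ∂m) ^ 2 := by ring
      _ ≤ M * (F2 * L2 ℓ) := mul_le_mul_of_nonneg_left (hA2 ℓ) hM
      _ = M * F2 * L2 ℓ := by ring
  have hHabsnn : ∀ ℓ, 0 ≤ ∫ q, ‖H ℓ q‖ ∂(m.prod m) :=
    fun ℓ => integral_nonneg fun q => norm_nonneg _
  have hsumH : Summable fun ℓ => ∫ q, ‖H ℓ q‖ ∂(m.prod m) := by
    have hb : Summable (fun ℓ => M * F2 * L2 ℓ) := by
      simpa [mul_assoc] using hsum.mul_left (M * F2)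
    exact Summable.of_nonneg_of_le hHabsnn hHabs hb
  -- exchange sum and integral
  have hHsum_eq : ∑' ℓ, ∫ q, H ℓ q ∂(m.prod m) = ∫ q, ∑' ℓ, H ℓ q ∂(m.prod m) :=
    integral_tsum_of_summable_integral_norm hHint hsumH
  -- pointwise identity with the statement's integrand
  have hpt : ∀ q : (X × T) × (X × T),
      f q.1 * (∑' ℓ : ℕ,
        lam ℓ q.1.2 * Ct q.1.2 q.2.2 * lam ℓ q.2.2 * φ ℓ q.1.1 * φ ℓ q.2.1) * f q.2
      = ∑' ℓ, H ℓ q := by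
    intro q
    rw [← tsum_mul_left, ← tsum_mul_right]
    refine tsum_congr fun ℓ => ?_
    simp only [hH, hA]
    ring
  -- a.e. summability
  have hlint : ∀ ℓ, ∫⁻ q, ‖H ℓ q‖₊ ∂(m.prod m)
      = ENNReal.ofReal (∫ q, ‖H ℓ q‖ ∂(m.prod m)) := fun ℓ =>
    (ofReal_integral_norm_eq_lintegral_enorm (hHint ℓ)).symm
  have hfin : ∑' ℓ, ∫⁻ q, ‖H ℓ q‖₊ ∂(m.prod m) ≠ ⊤ := by
    have h1 : ∑' ℓ, ∫⁻ q, ‖H ℓ q‖₊ ∂(m.prod m)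
        = ENNReal.ofReal (∑' ℓ, ∫ q, ‖H ℓ q‖ ∂(m.prod m)) := by
      rw [ENNReal.ofReal_tsum_of_nonneg hHabsnn hsumH]
      exact tsum_congr hlint
    rw [h1]
    exact ENNReal.ofReal_ne_top
  have haemeas : ∀ ℓ, AEMeasurable (fun q => (‖H ℓ q‖₊ : ENNReal)) (m.prod m) :=
    fun ℓ => (hHint ℓ).aestronglyMeasurable.enorm
  have hae : ∀ᵐ q ∂(m.prod m), Summable fun ℓ => ‖H ℓ q‖ := by
    have h1 : ∫⁻ q, ∑' ℓ, (‖H ℓ q‖₊ : ENNReal) ∂(m.prod m) ≠ ⊤ := by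
      rw [lintegral_tsum haemeas]
      exact hfin
    filter_upwards [ae_lt_top' (AEMeasurable.ennreal_tsum haemeas) h1] with q hq
    have h2 := ENNReal.tsum_coe_ne_top_iff_summable_coe.mp hq.ne
    simpa [coe_nnnorm] using h2
  -- integrability of the series
  have hΦasm : AEStronglyMeasurable (fun q => ∑' ℓ, H ℓ q) (m.prod m) := by
    refine aestronglyMeasurable_of_tendsto_ae atTop
      (fun n => ?_ : ∀ n : ℕ, AEStronglyMeasurable
        (fun q => ∑ ℓ ∈ Finset.range n, H ℓ q) (m.prod m)) ?_
    · exact Finset.aestronglyMeasurable_fun_sum _ fun ℓ _ => (hHint ℓ).aestronglyMeasurable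
    · filter_upwards [hae] with q hq
      exact hq.of_norm.hasSum.tendsto_sum_nat
  have hΦint : Integrable (fun q => ∑' ℓ, H ℓ q) (m.prod m) := by
    refine ⟨hΦasm, ?_⟩
    have h1 : ∫⁻ q, ‖∑' ℓ, H ℓ q‖₊ ∂(m.prod m)
        ≤ ∫⁻ q, ∑' ℓ, (‖H ℓ q‖₊ : ENNReal) ∂(m.prod m) := by
      refine lintegral_mono_ae ?_
      filter_upwards [hae] with q hq
      have hqnn : Summable fun ℓ => ‖H ℓ q‖₊ := by
        rw [← NNReal.summable_coe]
        simpa [coe_nnnorm] using hq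
      calc (‖∑' ℓ, H ℓ q‖₊ : ENNReal) ≤ ((∑' ℓ, ‖H ℓ q‖₊ : NNReal) : ENNReal) :=
            ENNReal.coe_le_coe.2 (nnnorm_tsum_le hqnn)
        _ = ∑' ℓ, (‖H ℓ q‖₊ : ENNReal) := ENNReal.coe_tsum hqnn
    rw [HasFiniteIntegral]
    calc ∫⁻ q, ‖∑' ℓ, H ℓ q‖₊ ∂(m.prod m)
        ≤ ∫⁻ q, ∑' ℓ, (‖H ℓ q‖₊ : ENNReal) ∂(m.prod m) := h1
      _ = ∑' ℓ, ∫⁻ q, ‖H ℓ q‖₊ ∂(m.prod m) := lintegral_tsum haemeas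
      _ < ⊤ := hfin.lt_top
  -- conclusion 1
  have hconc1 : Integrable (fun q : (X × T) × (X × T) =>
      f q.1 * (∑' ℓ : ℕ,
        lam ℓ q.1.2 * Ct q.1.2 q.2.2 * lam ℓ q.2.2 * φ ℓ q.1.1 * φ ℓ q.2.1)
        * f q.2) (m.prod m) :=
    hΦint.congr (Eventually.of_forall fun q => (hpt q).symm)
  -- Fubini computation: ∫ H ℓ = ∫ g * J
  have hHval : ∀ ℓ, ∫ q, H ℓ q ∂(m.prod m) = ∫ t, g ℓ t * J ℓ t ∂ν := by
    intro ℓ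
    have hPint : ∀ t1 : T, Integrable (fun q2 : X × T => Ct t1 q2.2 * A ℓ q2) m := by
      intro t1
      exact (hAint ℓ).bdd_mul
        ((hCtmeas.comp (measurable_const.prodMk measurable_snd)).aestronglyMeasurable)
        (Eventually.of_forall fun q2 => by rw [Real.norm_eq_abs]; exact hCtbd _ _)
    have hinner : ∀ q1 : X × T, ∫ q2, H ℓ (q1, q2) ∂m = A ℓ q1 * J ℓ q1.2 := by
      intro q1
      calc ∫ q2, H ℓ (q1, q2) ∂m
          = ∫ q2 : X × T, A ℓ q1 * (Ct q1.2 q2.2 * A ℓ q2) ∂m := by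
            simp only [hH, mul_assoc]
        _ = A ℓ q1 * ∫ q2 : X × T, Ct q1.2 q2.2 * A ℓ q2 ∂m := integral_const_mul _ _
        _ = A ℓ q1 * J ℓ q1.2 := by
            congr 1
            calc ∫ q2 : X × T, Ct q1.2 q2.2 * A ℓ q2 ∂m
                = ∫ t2, ∫ x2, Ct q1.2 t2 * A ℓ (x2, t2) ∂μ ∂ν :=
                  integral_prod_symm _ (hPint q1.2)
              _ = ∫ t2, Ct q1.2 t2 * g ℓ t2 ∂ν := by
                  refine integral_congr_ae (Eventually.of_forall fun t2 => ?_)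
                  dsimp only
                  rw [integral_const_mul, ← hgeq ℓ t2]
              _ = J ℓ q1.2 := rfl
    have houter : Integrable (fun q1 : X × T => A ℓ q1 * J ℓ q1.2) m := by
      have := (hAint ℓ).bdd_mul
        (((hJsm ℓ).comp_measurable measurable_snd).aestronglyMeasurable)
        (Eventually.of_forall fun q1 => by rw [Real.norm_eq_abs]; exact hJbd ℓ q1.2)
      exact this.congr (Eventually.of_forall fun q1 => mul_comm _ _)
    calc ∫ q, H ℓ q ∂(m.prod m)
        = ∫ q1, ∫ q2, H ℓ (q1, q2) ∂m ∂m := integral_prod _ (hHint ℓ)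
      _ = ∫ q1, A ℓ q1 * J ℓ q1.2 ∂m := integral_congr_ae (Eventually.of_forall hinner)
      _ = ∫ t1, ∫ x1, A ℓ (x1, t1) * J ℓ t1 ∂μ ∂ν := integral_prod_symm _ houter
      _ = ∫ t1, g ℓ t1 * J ℓ t1 ∂ν := by
          refine integral_congr_ae (Eventually.of_forall fun t1 => ?_)
          dsimp only
          rw [integral_mul_const, ← hgeq ℓ t1]
  -- conclusion 4
  have hconc4 : ∫ q : (X × T) × (X × T),
      f q.1 * (∑' ℓ : ℕ,
        lam ℓ q.1.2 * Ct q.1.2 q.2.2 * lam ℓ q.2.2 * φ ℓ q.1.1 * φ ℓ q.2.1)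
        * f q.2 ∂(m.prod m)
      = ∑' ℓ : ℕ, ∫ t, ∫ t', fc ℓ t * lam ℓ t * Ct t t' * lam ℓ t' * fc ℓ t' ∂ν ∂ν := by
    calc ∫ q : (X × T) × (X × T),
        f q.1 * (∑' ℓ : ℕ,
          lam ℓ q.1.2 * Ct q.1.2 q.2.2 * lam ℓ q.2.2 * φ ℓ q.1.1 * φ ℓ q.2.1)
          * f q.2 ∂(m.prod m)
        = ∫ q, ∑' ℓ, H ℓ q ∂(m.prod m) := integral_congr_ae (Eventually.of_forall hpt)
      _ = ∑' ℓ, ∫ q, H ℓ q ∂(m.prod m) := hHsum_eq.symm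
      _ = ∑' ℓ : ℕ, ∫ t, ∫ t', fc ℓ t * lam ℓ t * Ct t t' * lam ℓ t' * fc ℓ t' ∂ν ∂ν :=
          tsum_congr fun ℓ => (hHval ℓ).trans (hIJ ℓ).symm
  exact ⟨hconc1, hconc2, hconc3, hconc4, tsum_nonneg hInn⟩
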